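/- arXiv:0806.1453 — 2 statements merged into one kernel-verified Lean document; each statement's English description precedes it below -/
import Mathlib

section
/- There exists an absolute constant C > 0 with the following property. Let 2 ≤ a ≤ b, let F : [a,b] → ℝ be twice continuously differentiable, and let m > 0 and K ≥ 0 satisfy |F'(r)| ≥ m and |F''(r)| ≤ K |F'(r)|² (log r)^{3/4} / r for all r ∈ [a,b]. Then |∫_a^b e^{i F(r)} / (r (log r)^{3/4}) dr| ≤ C (1/m + K) / a. -/
open MeasureTheory Filter Topology intervalIntegral

noncomputable def oscL (r : ℝ) : ℝ := Real.log r ^ ((3:ℝ)/4)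
noncomputable def oscL' (r : ℝ) : ℝ := 3/4 * Real.log r ^ ((3:ℝ)/4 - 1) * r⁻¹

lemma hasDerivAt_oscL {r : ℝ} (hr : 1 < r) : HasDerivAt oscL (oscL' r) r := by
  have h0 : r ≠ 0 := by positivity
  have := (Real.hasDerivAt_rpow_const (x := Real.log r) (p := (3:ℝ)/4)
      (Or.inl (Real.log_pos hr).ne')).comp r (Real.hasDerivAt_log h0)
  exact this

lemma osc_key {F F' F'' : ℝ → ℝ} {r : ℝ} (hr : 1 < r)
    (hF : HasDerivAt F (F' r) r) (hF' : HasDerivAt F' (F'' r) r) (hne : F' r ≠ 0) :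
    HasDerivAt
      (fun x => Complex.exp (Complex.I * F x) * (-Complex.I / ((F' x * (x * oscL x) : ℝ) : ℂ)))
      (Complex.exp (Complex.I * F r) / ((r * oscL r : ℝ) : ℂ)
        + Complex.exp (Complex.I * F r) *
          (Complex.I * ((F'' r * (r * oscL r) + F' r * (oscL r + r * oscL' r) : ℝ) : ℂ)
            / ((F' r * (r * oscL r) : ℝ) : ℂ)^2)) r := by
  have hr0 : (0:ℝ) < r := lt_trans one_pos hr
  have hlog : 0 < Real.log r := Real.log_pos hr
  have hLpos : 0 < oscL r := Real.rpow_pos_of_pos hlog _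
  have hL : HasDerivAt oscL (oscL' r) r := hasDerivAt_oscL hr
  have hD : HasDerivAt (fun x => F' x * (x * oscL x))
      (F'' r * (r * oscL r) + F' r * (oscL r + r * oscL' r)) r := by
    have h := hF'.mul ((hasDerivAt_id r).mul hL)
    refine h.congr_deriv ?_
    simp only [Pi.mul_apply, id_eq]
    ring
  have hDC : HasDerivAt (fun x => ((F' x * (x * oscL x) : ℝ) : ℂ))
      ((F'' r * (r * oscL r) + F' r * (oscL r + r * oscL' r) : ℝ) : ℂ) r := hD.ofReal_comp
  have hDne : ((F' r * (r * oscL r) : ℝ) : ℂ) ≠ 0 :=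
    Complex.ofReal_ne_zero.mpr (mul_ne_zero hne (by positivity))
  have hE : HasDerivAt (fun x => Complex.exp (Complex.I * F x))
      (Complex.exp (Complex.I * F r) * (Complex.I * (F' r : ℂ))) r :=
    ((hF.ofReal_comp).const_mul Complex.I).cexp
  have hg : HasDerivAt (fun x => -Complex.I * (((F' x * (x * oscL x) : ℝ) : ℂ))⁻¹)
      (-Complex.I * (-((((F' r * (r * oscL r) : ℝ) : ℂ)) ^ 2)⁻¹ *
        ((F'' r * (r * oscL r) + F' r * (oscL r + r * oscL' r) : ℝ) : ℂ))) r := by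
    simpa [Function.comp_def] using ((hasDerivAt_inv hDne).comp r hDC).const_mul (-Complex.I)
  have h := hE.mul hg
  have heq : (fun x => Complex.exp (Complex.I * F x) * (-Complex.I / ((F' x * (x * oscL x) : ℝ) : ℂ)))
      = (fun x => Complex.exp (Complex.I * F x) * (-Complex.I * (((F' x * (x * oscL x) : ℝ) : ℂ))⁻¹)) := by
    funext x; rw [div_eq_mul_inv]
  rw [heq]
  refine h.congr_deriv ?_
  symm
  have hF'ne : ((F' r : ℝ) : ℂ) ≠ 0 := Complex.ofReal_ne_zero.mpr hne
  have hrLne : ((r * oscL r : ℝ) : ℂ) ≠ 0 := Complex.ofReal_ne_zero.mpr (by positivity)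
  push_cast
  field_simp
  ring_nf
  rw [Complex.I_sq]
  ring
/-- Integration-by-parts oscillatory integral estimate: there is an absolute constant `C > 0`
such that for `2 ≤ a ≤ b`, any twice continuously differentiable phase `F` on `[a,b]` with
`|F'| ≥ m > 0` and `|F''(r)| ≤ K |F'(r)|² (log r)^{3/4} / r`, one has
`|∫_a^b e^{iF(r)} / (r (log r)^{3/4}) dr| ≤ C (1/m + K) / a`. -/
theorem oscillatory_integral_estimate_quotient
    : ∃ C : ℝ, 0 < C ∧
      ∀ a b : ℝ, 2 ≤ a → a ≤ b →
      ∀ F F' F'' : ℝ → ℝ,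
        (∀ r ∈ Set.Icc a b, HasDerivAt F (F' r) r) →
        (∀ r ∈ Set.Icc a b, HasDerivAt F' (F'' r) r) →
        ContinuousOn F'' (Set.Icc a b) →
      ∀ m : ℝ, 0 < m → ∀ K : ℝ, 0 ≤ K →
        (∀ r ∈ Set.Icc a b, m ≤ |F' r|) →
        (∀ r ∈ Set.Icc a b, |F'' r| ≤ K * |F' r| ^ 2 * Real.log r ^ ((3 : ℝ) / 4) / r) →
        ‖∫ r in a..b, Complex.exp (Complex.I * (F r : ℝ)) /
            ((r * Real.log r ^ ((3 : ℝ) / 4) : ℝ) : ℂ)‖ ≤ C * (1 / m + K) / a := by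
  refine ⟨12, by norm_num, ?_⟩
  intro a b ha2 hab F F' F'' hF hF' hF''c m hm K hK hm' hKb
  have ha0 : (0:ℝ) < a := by linarith
  have huIcc : Set.uIcc a b = Set.Icc a b := Set.uIcc_of_le hab
  have h2r : ∀ r ∈ Set.Icc a b, (2:ℝ) ≤ r := fun r hr => le_trans ha2 hr.1
  have hr0 : ∀ r ∈ Set.Icc a b, (0:ℝ) < r := fun r hr => by have := h2r r hr; linarith
  have hr1 : ∀ r ∈ Set.Icc a b, (1:ℝ) < r := fun r hr => by have := h2r r hr; linarith
  have hloghalf : ∀ r ∈ Set.Icc a b, (1/2:ℝ) ≤ Real.log r := by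
    intro r hr
    have h1 : Real.log 2 ≤ Real.log r := Real.log_le_log (by norm_num) (h2r r hr)
    nlinarith [Real.log_two_gt_d9]
  have hlogpos : ∀ r ∈ Set.Icc a b, (0:ℝ) < Real.log r :=
    fun r hr => by have := hloghalf r hr; linarith
  have hLhalf : ∀ r ∈ Set.Icc a b, (1/2:ℝ) ≤ oscL r := by
    intro r hr
    have h1 : ((1:ℝ)/2) ^ ((3:ℝ)/4) ≤ Real.log r ^ ((3:ℝ)/4) :=
      Real.rpow_le_rpow (by norm_num) (hloghalf r hr) (by norm_num)
    have h2 : ((1:ℝ)/2) ^ ((1:ℝ)) ≤ ((1:ℝ)/2) ^ ((3:ℝ)/4) :=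
      Real.rpow_le_rpow_of_exponent_ge (by norm_num) (by norm_num) (by norm_num)
    rw [Real.rpow_one] at h2
    exact le_trans h2 h1
  have hLpos : ∀ r ∈ Set.Icc a b, (0:ℝ) < oscL r :=
    fun r hr => lt_of_lt_of_le (by norm_num) (hLhalf r hr)
  have hF'ne : ∀ r ∈ Set.Icc a b, F' r ≠ 0 := by
    intro r hr h
    have := hm' r hr
    rw [h, abs_zero] at this
    linarith
  have hL'nonneg : ∀ r ∈ Set.Icc a b, 0 ≤ oscL' r := by
    intro r hr
    have h1 : (0:ℝ) ≤ Real.log r ^ ((3:ℝ)/4 - 1) :=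
      Real.rpow_nonneg (le_of_lt (hlogpos r hr)) _
    have h2 : (0:ℝ) ≤ r⁻¹ := inv_nonneg.mpr (le_of_lt (hr0 r hr))
    simp only [oscL']
    positivity
  have hL'bd : ∀ r ∈ Set.Icc a b, r * oscL' r ≤ 3/2 := by
    intro r hr
    have hrp := hr0 r hr
    have hq : Real.log r ^ ((3:ℝ)/4 - 1) ≤ 2 := by
      have he : ((3:ℝ)/4 - 1) = -((1:ℝ)/4) := by norm_num
      rw [he, Real.rpow_neg (le_of_lt (hlogpos r hr))]
      have h1 : ((1:ℝ)/2) ^ ((1:ℝ)/4) ≤ Real.log r ^ ((1:ℝ)/4) :=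
        Real.rpow_le_rpow (by norm_num) (hloghalf r hr) (by norm_num)
      have h2 : ((1:ℝ)/2) ^ ((1:ℝ)) ≤ ((1:ℝ)/2) ^ ((1:ℝ)/4) :=
        Real.rpow_le_rpow_of_exponent_ge (by norm_num) (by norm_num) (by norm_num)
      rw [Real.rpow_one] at h2
      have h3 : (1/2:ℝ) ≤ Real.log r ^ ((1:ℝ)/4) := le_trans h2 h1
      have h4 : (0:ℝ) < Real.log r ^ ((1:ℝ)/4) := by linarith
      calc (Real.log r ^ ((1:ℝ)/4))⁻¹ ≤ (1/2:ℝ)⁻¹ := by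
            apply inv_anti₀ (by norm_num) h3
        _ = 2 := by norm_num
    simp only [oscL']
    have : r * (3/4 * Real.log r ^ ((3:ℝ)/4 - 1) * r⁻¹) = 3/4 * Real.log r ^ ((3:ℝ)/4 - 1) := by
      field_simp
    rw [this]
    linarith
  -- rewrite hKb in terms of oscL
  have hKb' : ∀ r ∈ Set.Icc a b, |F'' r| ≤ K * |F' r| ^ 2 * oscL r / r := hKb
  -- D is bounded below
  have hDlb : ∀ r ∈ Set.Icc a b, m * (a * (1/2)) ≤ |F' r * (r * oscL r)| := by
    intro r hr
    rw [abs_mul, abs_of_nonneg (le_of_lt (mul_pos (hr0 r hr) (hLpos r hr)))]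
    have h1 : a * (1/2) ≤ r * oscL r :=
      mul_le_mul hr.1 (hLhalf r hr) (by norm_num) (le_of_lt (hr0 r hr))
    have h2 := hm' r hr
    have h3 : (0:ℝ) < a * (1/2) := by linarith
    exact mul_le_mul h2 h1 (le_of_lt h3) (abs_nonneg _)
  have hDne : ∀ r ∈ Set.Icc a b, F' r * (r * oscL r) ≠ 0 :=
    fun r hr => mul_ne_zero (hF'ne r hr) (ne_of_gt (mul_pos (hr0 r hr) (hLpos r hr)))
  -- derivative statement
  have hGd : ∀ r ∈ Set.uIcc a b, HasDerivAt
      (fun x => Complex.exp (Complex.I * F x) * (-Complex.I / ((F' x * (x * oscL x) : ℝ) : ℂ)))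
      ((fun x => Complex.exp (Complex.I * F x) / ((x * oscL x : ℝ) : ℂ)
        + Complex.exp (Complex.I * F x) *
          (Complex.I * ((F'' x * (x * oscL x) + F' x * (oscL x + x * oscL' x) : ℝ) : ℂ)
            / ((F' x * (x * oscL x) : ℝ) : ℂ)^2)) r) r := by
    intro r hr
    rw [huIcc] at hr
    exact osc_key (hr1 r hr) (hF r hr) (hF' r hr) (hF'ne r hr)
  -- continuity
  have hFc : ContinuousOn F (Set.Icc a b) := fun r hr => (hF r hr).continuousAt.continuousWithinAt
  have hF'c : ContinuousOn F' (Set.Icc a b) := fun r hr => (hF' r hr).continuousAt.continuousWithinAt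
  have hLc : ContinuousOn oscL (Set.Icc a b) :=
    fun r hr => (hasDerivAt_oscL (hr1 r hr)).continuousAt.continuousWithinAt
  have hL'c : ContinuousOn oscL' (Set.Icc a b) := by
    intro r hr
    apply ContinuousAt.continuousWithinAt
    have h1 : ContinuousAt Real.log r := Real.continuousAt_log (ne_of_gt (hr0 r hr))
    have h2 : ContinuousAt (fun x : ℝ => x ^ ((3:ℝ)/4 - 1)) (Real.log r) :=
      Real.continuousAt_rpow_const _ _ (Or.inl (ne_of_gt (hlogpos r hr)))
    have h3 : ContinuousAt (fun x : ℝ => x⁻¹) r := continuousAt_inv₀ (ne_of_gt (hr0 r hr))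
    exact (continuousAt_const.mul (h2.comp h1)).mul h3
  have hEc : ContinuousOn (fun r => Complex.exp (Complex.I * F r)) (Set.Icc a b) :=
    (continuousOn_const.mul (Complex.continuous_ofReal.comp_continuousOn hFc)).cexp
  have hDc : ContinuousOn (fun r => F' r * (r * oscL r)) (Set.Icc a b) :=
    hF'c.mul (continuousOn_id.mul hLc)
  have hD'c : ContinuousOn (fun r => F'' r * (r * oscL r) + F' r * (oscL r + r * oscL' r))
      (Set.Icc a b) :=
    (hF''c.mul (continuousOn_id.mul hLc)).add (hF'c.mul (hLc.add (continuousOn_id.mul hL'c)))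
  have hfc : ContinuousOn (fun r => Complex.exp (Complex.I * F r) / ((r * oscL r : ℝ) : ℂ))
      (Set.Icc a b) := by
    apply hEc.div (Complex.continuous_ofReal.comp_continuousOn (continuousOn_id.mul hLc))
    intro r hr
    exact Complex.ofReal_ne_zero.mpr (ne_of_gt (mul_pos (hr0 r hr) (hLpos r hr)))
  have hTc : ContinuousOn (fun r => Complex.exp (Complex.I * F r) *
      (Complex.I * ((F'' r * (r * oscL r) + F' r * (oscL r + r * oscL' r) : ℝ) : ℂ)
        / ((F' r * (r * oscL r) : ℝ) : ℂ)^2)) (Set.Icc a b) := by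
    apply hEc.mul
    apply ContinuousOn.div
      (continuousOn_const.mul (Complex.continuous_ofReal.comp_continuousOn hD'c))
      ((Complex.continuous_ofReal.comp_continuousOn hDc).pow 2)
    intro r hr
    exact pow_ne_zero _ (Complex.ofReal_ne_zero.mpr (hDne r hr))
  -- integrability
  have hf_int : IntervalIntegrable
      (fun r => Complex.exp (Complex.I * F r) / ((r * oscL r : ℝ) : ℂ)) volume a b := by
    apply ContinuousOn.intervalIntegrable; rw [huIcc]; exact hfc
  have hT_int : IntervalIntegrable (fun r => Complex.exp (Complex.I * F r) *
      (Complex.I * ((F'' r * (r * oscL r) + F' r * (oscL r + r * oscL' r) : ℝ) : ℂ)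
        / ((F' r * (r * oscL r) : ℝ) : ℂ)^2)) volume a b := by
    apply ContinuousOn.intervalIntegrable; rw [huIcc]; exact hTc
  -- integration by parts identity
  have hsub := intervalIntegral.integral_eq_sub_of_hasDerivAt hGd (hf_int.add hT_int)
  have hadd := intervalIntegral.integral_add hf_int hT_int
  have hkey : (∫ r in a..b, Complex.exp (Complex.I * F r) / ((r * oscL r : ℝ) : ℂ))
      = ((Complex.exp (Complex.I * F b) * (-Complex.I / ((F' b * (b * oscL b) : ℝ) : ℂ)))
        - (Complex.exp (Complex.I * F a) * (-Complex.I / ((F' a * (a * oscL a) : ℝ) : ℂ))))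
      - ∫ r in a..b, Complex.exp (Complex.I * F r) *
          (Complex.I * ((F'' r * (r * oscL r) + F' r * (oscL r + r * oscL' r) : ℝ) : ℂ)
            / ((F' r * (r * oscL r) : ℝ) : ℂ)^2) := by
    rw [← hsub, hadd]; ring
  -- boundary bound
  have hexp1 : ∀ x : ℝ, ‖Complex.exp (Complex.I * (x:ℂ))‖ = 1 := by
    intro x
    rw [Complex.norm_exp]
    simp [Complex.mul_re]
  have hGbd : ∀ r ∈ Set.Icc a b,
      ‖Complex.exp (Complex.I * F r) * (-Complex.I / ((F' r * (r * oscL r) : ℝ) : ℂ))‖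
        ≤ 2 / (m * a) := by
    intro r hr
    rw [norm_mul, hexp1, one_mul, norm_div, norm_neg, Complex.norm_I, Complex.norm_real,
      Real.norm_eq_abs]
    have h1 := hDlb r hr
    have h2 : (0:ℝ) < m * (a * (1/2)) := by positivity
    calc 1 / |F' r * (r * oscL r)| ≤ 1 / (m * (a * (1/2))) :=
          one_div_le_one_div_of_le h2 h1
      _ = 2 / (m * a) := by field_simp
  -- pointwise tail bound
  have hTbd : ∀ r ∈ Set.Icc a b,
      ‖Complex.exp (Complex.I * F r) *
        (Complex.I * ((F'' r * (r * oscL r) + F' r * (oscL r + r * oscL' r) : ℝ) : ℂ)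
          / ((F' r * (r * oscL r) : ℝ) : ℂ)^2)‖ ≤ (K + 8/m) * (r^2)⁻¹ := by
    intro r hr
    rw [norm_mul, hexp1, one_mul, norm_div, norm_mul, Complex.norm_I, one_mul, norm_pow,
      Complex.norm_real, Complex.norm_real, Real.norm_eq_abs, Real.norm_eq_abs]
    have hP := hm' r hr
    have hPpos : (0:ℝ) < |F' r| := lt_of_lt_of_le hm hP
    have hL2 := hLhalf r hr
    have hrp := hr0 r hr
    have hLp := hLpos r hr
    have hL'n := hL'nonneg r hr
    have hL'b := hL'bd r hr
    have hDabspos : (0:ℝ) < |F' r * (r * oscL r)| := abs_pos.mpr (hDne r hr)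
    -- main numerator bound
    have hA : |F'' r| * (r * oscL r) ≤ K * (F' r)^2 * (oscL r)^2 := by
      calc |F'' r| * (r * oscL r) ≤ (K * |F' r| ^ 2 * oscL r / r) * (r * oscL r) := by
            apply mul_le_mul_of_nonneg_right (hKb' r hr)
            positivity
        _ = K * (F' r)^2 * (oscL r)^2 := by
            rw [← sq_abs (F' r)]
            field_simp
    have hPL : m * (1/2) ≤ |F' r| * oscL r :=
      mul_le_mul hP hL2 (by norm_num) (abs_nonneg (F' r))
    have hPLpos : (0:ℝ) < |F' r| * oscL r := mul_pos hPpos hLp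
    have hLsq : (1/2:ℝ) * (1/2) ≤ oscL r * oscL r :=
      mul_le_mul hL2 hL2 (by norm_num) (le_of_lt hLp)
    have hb1 : |F' r| * oscL r ≤ (2/m) * (|F' r|^2 * (oscL r)^2) := by
      rw [show (2/m) * (|F' r|^2 * (oscL r)^2) = 2 * (|F' r|^2 * (oscL r)^2) / m from by ring,
        le_div_iff₀ hm]
      nlinarith [hPL, hPLpos]
    have hb2 : |F' r| * (r * oscL' r) ≤ (6/m) * (|F' r|^2 * (oscL r)^2) := by
      have h2 : |F' r| * (r * oscL' r) ≤ 3/2 * |F' r| := by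
        have := mul_le_mul_of_nonneg_left hL'b (abs_nonneg (F' r))
        linarith
      have h3 : 3/2 * |F' r| ≤ (6/m) * (|F' r|^2 * (oscL r)^2) := by
        rw [show (6/m) * (|F' r|^2 * (oscL r)^2) = 6 * (|F' r|^2 * (oscL r)^2) / m from by ring,
          le_div_iff₀ hm]
        nlinarith [hLsq, hP, hPpos, sq_nonneg (|F' r|),
          mul_nonneg (le_of_lt hPpos) (sub_nonneg.mpr hP),
          mul_le_mul_of_nonneg_left hLsq (sq_nonneg (|F' r|))]
      linarith
    have hmain : |F'' r * (r * oscL r) + F' r * (oscL r + r * oscL' r)|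
        ≤ (K + 8/m) * ((F' r)^2 * (oscL r)^2) := by
      calc |F'' r * (r * oscL r) + F' r * (oscL r + r * oscL' r)|
          ≤ |F'' r * (r * oscL r)| + |F' r * (oscL r + r * oscL' r)| := abs_add_le _ _
        _ = |F'' r| * (r * oscL r) + |F' r| * (oscL r + r * oscL' r) := by
            rw [abs_mul (F'' r), abs_mul (F' r),
              abs_of_nonneg (le_of_lt (mul_pos hrp hLp)),
              abs_of_nonneg (add_nonneg (le_of_lt hLp) (mul_nonneg (le_of_lt hrp) hL'n))]
        _ = |F'' r| * (r * oscL r) + (|F' r| * oscL r + |F' r| * (r * oscL' r)) := by ring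
        _ ≤ K * (F' r)^2 * (oscL r)^2 + ((2/m) * (|F' r|^2 * (oscL r)^2)
              + (6/m) * (|F' r|^2 * (oscL r)^2)) := by
            apply add_le_add hA (add_le_add hb1 hb2)
        _ = (K + 8/m) * ((F' r)^2 * (oscL r)^2) := by rw [sq_abs]; ring
    rw [div_le_iff₀ (pow_pos hDabspos 2)]
    calc |F'' r * (r * oscL r) + F' r * (oscL r + r * oscL' r)|
        ≤ (K + 8/m) * ((F' r)^2 * (oscL r)^2) := hmain
      _ = (K + 8/m) * (r^2)⁻¹ * |F' r * (r * oscL r)|^2 := by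
          rw [sq_abs]
          field_simp
  -- tail integral bound
  have hc0 : (0:ℝ) ≤ K + 8/m := by positivity
  have hanti : ∀ r ∈ Set.uIcc a b,
      HasDerivAt (fun x => -((K + 8/m) * x⁻¹)) ((K + 8/m) * (r^2)⁻¹) r := by
    intro r hr
    rw [huIcc] at hr
    have h := ((hasDerivAt_inv (ne_of_gt (hr0 r hr))).const_mul (K + 8/m)).neg
    refine h.congr_deriv ?_
    ring
  have hbound_int : IntervalIntegrable (fun r => (K + 8/m) * (r^2)⁻¹) volume a b := by
    apply ContinuousOn.intervalIntegrable
    intro r hr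
    rw [huIcc] at hr
    exact (continuousAt_const.mul ((continuousAt_id.pow 2).inv₀
      (pow_ne_zero 2 (ne_of_gt (hr0 r hr))))).continuousWithinAt
  have hIcalc := intervalIntegral.integral_eq_sub_of_hasDerivAt hanti hbound_int
  have hTle : ‖∫ r in a..b, Complex.exp (Complex.I * F r) *
      (Complex.I * ((F'' r * (r * oscL r) + F' r * (oscL r + r * oscL' r) : ℝ) : ℂ)
        / ((F' r * (r * oscL r) : ℝ) : ℂ)^2)‖ ≤ (K + 8/m) / a := by
    have h1 : ‖∫ r in a..b, Complex.exp (Complex.I * F r) *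
        (Complex.I * ((F'' r * (r * oscL r) + F' r * (oscL r + r * oscL' r) : ℝ) : ℂ)
          / ((F' r * (r * oscL r) : ℝ) : ℂ)^2)‖
        ≤ |∫ r in a..b, (K + 8/m) * (r^2)⁻¹| := by
      refine intervalIntegral.norm_integral_le_abs_of_norm_le ?_ hbound_int
      refine (ae_restrict_iff' measurableSet_uIoc).mpr (ae_of_all _ ?_)
      intro t ht
      refine hTbd t ?_
      rw [Set.uIoc_of_le hab] at ht
      exact Set.Ioc_subset_Icc_self ht
    have hb0 : (0:ℝ) < b := lt_of_lt_of_le ha0 hab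
    have h2 : |∫ r in a..b, (K + 8/m) * (r^2)⁻¹| ≤ (K + 8/m) / a := by
      rw [hIcalc]
      have h5 : b⁻¹ ≤ a⁻¹ := inv_anti₀ ha0 hab
      have h6 : (0:ℝ) ≤ (K + 8/m) * a⁻¹ - (K + 8/m) * b⁻¹ := by
        nlinarith [mul_le_mul_of_nonneg_left h5 hc0]
      have h3 : (0:ℝ) ≤ (K + 8/m) * b⁻¹ :=
        mul_nonneg hc0 (inv_nonneg.mpr (le_of_lt hb0))
      rw [show -((K + 8/m) * b⁻¹) - -((K + 8/m) * a⁻¹)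
          = (K + 8/m) * a⁻¹ - (K + 8/m) * b⁻¹ from by ring, abs_of_nonneg h6,
        show (K + 8/m) / a = (K + 8/m) * a⁻¹ from div_eq_mul_inv _ _]
      linarith
    linarith
  -- assemble
  have hgoal_eq : (∫ r in a..b, Complex.exp (Complex.I * (F r : ℝ)) /
      ((r * Real.log r ^ ((3 : ℝ) / 4) : ℝ) : ℂ))
      = ∫ r in a..b, Complex.exp (Complex.I * F r) / ((r * oscL r : ℝ) : ℂ) := rfl
  rw [hgoal_eq, hkey]
  have hGa := hGbd a ⟨le_refl a, hab⟩
  have hGb := hGbd b ⟨hab, le_refl b⟩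
  calc ‖((Complex.exp (Complex.I * F b) * (-Complex.I / ((F' b * (b * oscL b) : ℝ) : ℂ)))
        - (Complex.exp (Complex.I * F a) * (-Complex.I / ((F' a * (a * oscL a) : ℝ) : ℂ))))
      - ∫ r in a..b, Complex.exp (Complex.I * F r) *
          (Complex.I * ((F'' r * (r * oscL r) + F' r * (oscL r + r * oscL' r) : ℝ) : ℂ)
            / ((F' r * (r * oscL r) : ℝ) : ℂ)^2)‖
      ≤ ‖(Complex.exp (Complex.I * F b) * (-Complex.I / ((F' b * (b * oscL b) : ℝ) : ℂ)))
        - (Complex.exp (Complex.I * F a) * (-Complex.I / ((F' a * (a * oscL a) : ℝ) : ℂ)))‖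
      + ‖∫ r in a..b, Complex.exp (Complex.I * F r) *
          (Complex.I * ((F'' r * (r * oscL r) + F' r * (oscL r + r * oscL' r) : ℝ) : ℂ)
            / ((F' r * (r * oscL r) : ℝ) : ℂ)^2)‖ := norm_sub_le _ _
    _ ≤ (2 / (m * a) + 2 / (m * a)) + (K + 8/m) / a := by
        apply add_le_add ?_ hTle
        calc ‖_ - _‖ ≤ _ + _ := norm_sub_le _ _
          _ ≤ 2 / (m * a) + 2 / (m * a) := add_le_add hGb hGa
    _ ≤ 12 * (1 / m + K) / a := by
        have h1 : 2 / (m * a) = (2 / m) / a := by rw [div_div]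
        rw [h1, ← add_div, ← add_div]
        gcongr
        rw [show (2:ℝ)/m = 2*(1/m) from by ring, show (8:ℝ)/m = 8*(1/m) from by ring]
        have h0 : (0:ℝ) < 1/m := by positivity
        linarith
end

section
/- There exists an absolute constant C > 0 with the following property. Let 2 ≤ a ≤ b, β > 0, let F : [a,b] → ℝ be twice continuously differentiable, and let m > 0 and K ≥ 0 satisfy |F'(r)| ≥ m and |F''(r)| ≤ K (log r)^{3/4} / r^β for all r ∈ [a,b]. Then |∫_a^b e^{i F(r)} / (r (log r)^{3/4}) dr| ≤ C (1/(a m) + K/(β a^β m²)). -/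
open MeasureTheory Filter Topology intervalIntegral

private lemma hasDerivAt_hfun {r : ℝ} (hr : 1 < r) :
    HasDerivAt (fun x => x * Real.log x ^ ((3:ℝ)/4))
      (Real.log r ^ ((3:ℝ)/4) + (3/4) * Real.log r ^ (-(1:ℝ)/4)) r := by
  have hr0 : (0:ℝ) < r := by linarith
  have hlog : 0 < Real.log r := Real.log_pos hr
  have d1 : HasDerivAt Real.log r⁻¹ r := Real.hasDerivAt_log hr0.ne'
  have d2 : HasDerivAt (fun x : ℝ => x ^ ((3:ℝ)/4))
      ((3:ℝ)/4 * Real.log r ^ ((3:ℝ)/4 - 1)) (Real.log r) :=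
    Real.hasDerivAt_rpow_const (Or.inl hlog.ne')
  have d3 := d2.comp r d1
  have d4 := (hasDerivAt_id r).mul d3
  refine d4.congr_deriv ?_
  rw [show (3:ℝ)/4 - 1 = -(1:ℝ)/4 by norm_num]
  field_simp
  simp only [Function.comp_apply, id_eq]
  ring

set_option maxHeartbeats 2000000 in
/-- Integration-by-parts oscillatory integral estimate under the second-derivative condition
`|F''(r)| ≤ K (log r)^{3/4} / r^β`: there is an absolute constant `C > 0` such that for
`2 ≤ a ≤ b`, `β > 0`, and any twice continuously differentiable phase `F` on `[a,b]` with
`|F'| ≥ m > 0`, one has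
`|∫_a^b e^{iF(r)} / (r (log r)^{3/4}) dr| ≤ C (1/(a m) + K/(β a^β m²))`. -/
theorem oscillatory_integral_estimate_power_decay
    : ∃ C : ℝ, 0 < C ∧
      ∀ a b : ℝ, 2 ≤ a → a ≤ b → ∀ β : ℝ, 0 < β →
      ∀ F F' F'' : ℝ → ℝ,
        (∀ r ∈ Set.Icc a b, HasDerivAt F (F' r) r) →
        (∀ r ∈ Set.Icc a b, HasDerivAt F' (F'' r) r) →
        ContinuousOn F'' (Set.Icc a b) →
      ∀ m : ℝ, 0 < m → ∀ K : ℝ, 0 ≤ K →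
        (∀ r ∈ Set.Icc a b, m ≤ |F' r|) →
        (∀ r ∈ Set.Icc a b, |F'' r| ≤ K * Real.log r ^ ((3 : ℝ) / 4) / r ^ β) →
        ‖∫ r in a..b, Complex.exp (Complex.I * (F r : ℝ)) /
            ((r * Real.log r ^ ((3 : ℝ) / 4) : ℝ) : ℂ)‖ ≤
          C * (1 / (a * m) + K / (β * a ^ β * m ^ 2)) := by
  refine ⟨6, by norm_num, ?_⟩
  intro a b ha hab β hβ F F' F'' hF hF' hF''c m hm K hK hm' hK'
  -- abbreviations
  set L : ℝ → ℝ := fun r => Real.log r ^ ((3:ℝ)/4) with hL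
  set h : ℝ → ℝ := fun r => r * L r with hh
  set h' : ℝ → ℝ := fun r => L r + (3/4) * Real.log r ^ (-(1:ℝ)/4) with hh'
  -- basic pointwise facts
  have hmem : ∀ r ∈ Set.Icc a b, 2 ≤ r := fun r hr => le_trans ha hr.1
  have hr1 : ∀ r ∈ Set.Icc a b, 1 < r := fun r hr => by have := hmem r hr; linarith
  have hr0 : ∀ r ∈ Set.Icc a b, 0 < r := fun r hr => by have := hmem r hr; linarith
  have hlogpos : ∀ r ∈ Set.Icc a b, 0 < Real.log r := fun r hr => Real.log_pos (hr1 r hr)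
  have hLpos : ∀ r ∈ Set.Icc a b, 0 < L r := fun r hr =>
    Real.rpow_pos_of_pos (hlogpos r hr) _
  have hhpos : ∀ r ∈ Set.Icc a b, 0 < h r := fun r hr =>
    mul_pos (hr0 r hr) (hLpos r hr)
  have hh'pos : ∀ r ∈ Set.Icc a b, 0 < h' r := fun r hr => by
    have := hLpos r hr
    have h2 : 0 < Real.log r ^ (-(1:ℝ)/4) := Real.rpow_pos_of_pos (hlogpos r hr) _
    simp only [hh']
    positivity
  have hF'ne : ∀ r ∈ Set.Icc a b, F' r ≠ 0 := fun r hr => by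
    have := hm' r hr
    intro hc; rw [hc] at this; simp at this; linarith
  have haicc : a ∈ Set.Icc a b := ⟨le_refl a, hab⟩
  have hbicc : b ∈ Set.Icc a b := ⟨hab, le_refl b⟩
  -- complex functions
  set φ : ℝ → ℂ := fun r => Complex.exp (Complex.I * (F r : ℝ)) with hφ
  set den : ℝ → ℂ := fun r => Complex.I * (F' r : ℂ) * ((h r : ℝ) : ℂ) with hden
  set G : ℝ → ℂ := fun r => φ r * (den r)⁻¹ with hG
  set v : ℝ → ℂ := fun r => φ r *
      (-(Complex.I * (F'' r : ℂ) * ((h r : ℝ) : ℂ) + Complex.I * (F' r : ℂ) * ((h' r : ℝ) : ℂ))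
        / (den r) ^ 2) with hv
  set u : ℝ → ℂ := fun r => Complex.exp (Complex.I * (F r : ℝ)) /
      ((r * Real.log r ^ ((3:ℝ)/4) : ℝ) : ℂ) with hu
  have hden_ne : ∀ r ∈ Set.Icc a b, den r ≠ 0 := by
    intro r hr
    simp only [hden]
    refine mul_ne_zero (mul_ne_zero Complex.I_ne_zero ?_) ?_
    · exact_mod_cast hF'ne r hr
    · exact_mod_cast (hhpos r hr).ne'
  -- derivative of G
  have hGderiv : ∀ r ∈ Set.Icc a b, HasDerivAt G (u r + v r) r := by
    intro r hr
    have dφ : HasDerivAt φ (Complex.I * (F' r : ℂ) * φ r) r := by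
      have d0 : HasDerivAt (fun x => Complex.I * ((F x : ℝ) : ℂ)) (Complex.I * (F' r : ℂ)) r :=
        ((hF r hr).ofReal_comp).const_mul Complex.I
      have := d0.cexp
      simpa [hφ, mul_comm] using this
    have dh : HasDerivAt (fun x : ℝ => ((x * Real.log x ^ ((3:ℝ)/4) : ℝ) : ℂ))
        ((h' r : ℝ) : ℂ) r := (hasDerivAt_hfun (hr1 r hr)).ofReal_comp
    have dF' : HasDerivAt (fun x => Complex.I * ((F' x : ℝ) : ℂ)) (Complex.I * (F'' r : ℂ)) r :=
      ((hF' r hr).ofReal_comp).const_mul Complex.I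
    have dden : HasDerivAt den
        (Complex.I * (F'' r : ℂ) * ((h r : ℝ) : ℂ) + Complex.I * (F' r : ℂ) * ((h' r : ℝ) : ℂ)) r := by
      have := dF'.mul dh
      exact this
    have dinv : HasDerivAt (fun x => (den x)⁻¹)
        (-(den r ^ 2)⁻¹ * (Complex.I * (F'' r : ℂ) * ((h r : ℝ) : ℂ) +
          Complex.I * (F' r : ℂ) * ((h' r : ℝ) : ℂ))) r :=
      (hasDerivAt_inv (hden_ne r hr)).comp r dden
    have dG := dφ.mul dinv
    have hne : ((h r : ℝ) : ℂ) ≠ 0 := by exact_mod_cast (hhpos r hr).ne'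
    have hne2 : ((F' r : ℝ) : ℂ) ≠ 0 := by exact_mod_cast hF'ne r hr
    have hA : (Complex.I * ((F' r : ℝ) : ℂ)) ≠ 0 := mul_ne_zero Complex.I_ne_zero hne2
    have hfirst : Complex.I * ((F' r : ℝ) : ℂ) * φ r * (den r)⁻¹ = u r := by
      simp only [hu, hden, hφ, hh, hL]
      rw [mul_inv]
      have e2 : Complex.I * ↑(F' r) * Complex.exp (Complex.I * ↑(F r)) *
            ((Complex.I * ↑(F' r))⁻¹ * (↑(r * Real.log r ^ ((3:ℝ)/4)))⁻¹)
          = (Complex.I * ↑(F' r) * (Complex.I * ↑(F' r))⁻¹) *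
            (Complex.exp (Complex.I * ↑(F r)) * (↑(r * Real.log r ^ ((3:ℝ)/4)))⁻¹) := by ring
      rw [e2, mul_inv_cancel₀ hA, one_mul, ← div_eq_mul_inv]
    refine dG.congr_deriv ?_
    rw [hfirst]
    congr 1
    simp only [hv]
    ring
  -- continuity facts
  have hFc : ContinuousOn F (Set.Icc a b) := fun r hr => ((hF r hr).continuousAt).continuousWithinAt
  have hF'c : ContinuousOn F' (Set.Icc a b) := fun r hr => ((hF' r hr).continuousAt).continuousWithinAt
  have hlogc : ContinuousOn Real.log (Set.Icc a b) := fun r hr =>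
    (Real.continuousAt_log (hr0 r hr).ne').continuousWithinAt
  have hLc : ContinuousOn L (Set.Icc a b) :=
    hlogc.rpow_const (fun r hr => Or.inr (by norm_num))
  have hhc : ContinuousOn h (Set.Icc a b) := continuousOn_id.mul hLc
  have hh'c : ContinuousOn h' (Set.Icc a b) :=
    hLc.add ((hlogc.rpow_const (fun r hr => Or.inl (hlogpos r hr).ne')).const_smul ((3:ℝ)/4))
  have hφc : ContinuousOn φ (Set.Icc a b) :=
    Complex.continuous_exp.comp_continuousOn
      (continuousOn_const.mul (Complex.continuous_ofReal.comp_continuousOn hFc))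
  have hdenc : ContinuousOn den (Set.Icc a b) :=
    (continuousOn_const.mul (Complex.continuous_ofReal.comp_continuousOn hF'c)).mul
      (Complex.continuous_ofReal.comp_continuousOn hhc)
  have huc : ContinuousOn u (Set.Icc a b) := by
    apply hφc.div (Complex.continuous_ofReal.comp_continuousOn hhc)
    intro r hr
    simp only [Function.comp_apply]
    exact_mod_cast (hhpos r hr).ne'
  have hvc : ContinuousOn v (Set.Icc a b) := by
    apply hφc.mul
    apply ContinuousOn.div
    · apply ContinuousOn.neg
      exact ((continuousOn_const.mul (Complex.continuous_ofReal.comp_continuousOn hF''c)).mul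
        (Complex.continuous_ofReal.comp_continuousOn hhc)).add
        ((continuousOn_const.mul (Complex.continuous_ofReal.comp_continuousOn hF'c)).mul
        (Complex.continuous_ofReal.comp_continuousOn hh'c))
    · exact hdenc.pow 2
    · intro r hr; exact pow_ne_zero 2 (hden_ne r hr)
  have huint : IntervalIntegrable u volume a b :=
    (huc.mono (by rw [Set.uIcc_of_le hab])).intervalIntegrable
  have hvint : IntervalIntegrable v volume a b :=
    (hvc.mono (by rw [Set.uIcc_of_le hab])).intervalIntegrable
  -- FTC
  have hFTC : ∫ r in a..b, (u r + v r) = G b - G a := by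
    apply intervalIntegral.integral_eq_sub_of_hasDerivAt
    · intro r hr
      exact hGderiv r (by rwa [Set.uIcc_of_le hab] at hr)
    · exact huint.add hvint
  have hsplit : ∫ r in a..b, u r = G b - G a - ∫ r in a..b, v r := by
    rw [← hFTC, intervalIntegral.integral_add huint hvint]; ring
  -- norm computations
  have hφ1 : ∀ x : ℝ, ‖Complex.exp (Complex.I * ((F x : ℝ) : ℂ))‖ = 1 := by
    intro x; rw [mul_comm]; exact Complex.norm_exp_ofReal_mul_I _
  have hdennorm : ∀ r ∈ Set.Icc a b, ‖den r‖ = |F' r| * h r := by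
    intro r hr
    simp only [hden]
    rw [norm_mul, norm_mul, Complex.norm_I, one_mul, Complex.norm_real, Complex.norm_real,
      Real.norm_eq_abs, Real.norm_eq_abs, abs_of_pos (hhpos r hr)]
  have hGbound : ∀ r ∈ Set.Icc a b, ‖G r‖ ≤ 1 / (m * h r) := by
    intro r hr
    have : ‖G r‖ = (|F' r| * h r)⁻¹ := by
      simp only [hG]
      rw [norm_mul, norm_inv, hdennorm r hr, hφ1 r, one_mul]
    rw [this, one_div]
    have hpos : 0 < m * h r := mul_pos hm (hhpos r hr)
    apply inv_anti₀ hpos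
    exact mul_le_mul_of_nonneg_right (hm' r hr) (hhpos r hr).le
  -- pointwise bound on v
  set B : ℝ → ℝ := fun r => K / m ^ 2 * r ^ (-(β + 1)) + h' r / (m * h r ^ 2) with hB
  have hvbound : ∀ r ∈ Set.Icc a b, ‖v r‖ ≤ B r := by
    intro r hr
    have hnormN : ‖-(Complex.I * ((F'' r : ℝ) : ℂ) * ((h r : ℝ) : ℂ) +
        Complex.I * ((F' r : ℝ) : ℂ) * ((h' r : ℝ) : ℂ))‖ = |F'' r * h r + F' r * h' r| := by
      rw [norm_neg]
      have e : Complex.I * ((F'' r : ℝ) : ℂ) * ((h r : ℝ) : ℂ) +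
          Complex.I * ((F' r : ℝ) : ℂ) * ((h' r : ℝ) : ℂ)
          = Complex.I * (((F'' r * h r + F' r * h' r : ℝ)) : ℂ) := by push_cast; ring
      rw [e, norm_mul, Complex.norm_I, one_mul, Complex.norm_real, Real.norm_eq_abs]
    have hveq : ‖v r‖ = |F'' r * h r + F' r * h' r| / (|F' r| * h r) ^ 2 := by
      simp only [hv]
      rw [norm_mul, hφ1 r, one_mul, norm_div, norm_pow, hdennorm r hr, hnormN]
    rw [hveq]
    have hrpos := hr0 r hr
    have hLr := hLpos r hr
    have hhr := hhpos r hr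
    have hh'r := hh'pos r hr
    have hF'r : m ≤ |F' r| := hm' r hr
    have habs : 0 < |F' r| := lt_of_lt_of_le hm hF'r
    have e1 : |F'' r * h r + F' r * h' r| ≤ |F'' r| * h r + |F' r| * h' r := by
      calc |F'' r * h r + F' r * h' r| ≤ |F'' r * h r| + |F' r * h' r| := abs_add_le _ _
        _ = |F'' r| * h r + |F' r| * h' r := by
            rw [abs_mul (F'' r) (h r), abs_mul (F' r) (h' r), abs_of_pos hhr, abs_of_pos hh'r]
    have step1 : |F'' r * h r + F' r * h' r| / (|F' r| * h r) ^ 2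
        ≤ (|F'' r| * h r + |F' r| * h' r) / (|F' r| * h r) ^ 2 := by gcongr
    have hrbpos : (0:ℝ) < r ^ β := Real.rpow_pos_of_pos hrpos β
    have t1 : |F'' r| * h r / (|F' r| * h r) ^ 2 ≤ K / m ^ 2 * r ^ (-(β + 1)) := by
      have hb1 : |F'' r| * h r / (|F' r| * h r) ^ 2
          ≤ (K * L r / r ^ β) * h r / (m * h r) ^ 2 := by
        apply div_le_div₀ (by positivity)
          (mul_le_mul_of_nonneg_right (hK' r hr) hhr.le) (by positivity)
        exact pow_le_pow_left₀ (by positivity)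
          (mul_le_mul_of_nonneg_right hF'r hhr.le) 2
      have hb2 : (K * L r / r ^ β) * h r / (m * h r) ^ 2 = K / m ^ 2 * r ^ (-(β + 1)) := by
        rw [Real.rpow_neg hrpos.le, Real.rpow_add hrpos, Real.rpow_one]
        simp only [hh]
        field_simp
      linarith
    have t2 : |F' r| * h' r / (|F' r| * h r) ^ 2 ≤ h' r / (m * h r ^ 2) := by
      have e2 : |F' r| * h' r / (|F' r| * h r) ^ 2 = h' r / (|F' r| * h r ^ 2) := by
        field_simp
      rw [e2]
      gcongr
    calc |F'' r * h r + F' r * h' r| / (|F' r| * h r) ^ 2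
        ≤ (|F'' r| * h r + |F' r| * h' r) / (|F' r| * h r) ^ 2 := step1
      _ = |F'' r| * h r / (|F' r| * h r) ^ 2 + |F' r| * h' r / (|F' r| * h r) ^ 2 := by
          rw [add_div]
      _ ≤ K / m ^ 2 * r ^ (-(β + 1)) + h' r / (m * h r ^ 2) := add_le_add t1 t2
  -- antiderivative of B
  set P : ℝ → ℝ := fun x => -(K / (m ^ 2 * β)) * x ^ (-β)
      - (m * (x * Real.log x ^ ((3:ℝ)/4)))⁻¹ with hP
  have hPderiv : ∀ r ∈ Set.Icc a b, HasDerivAt P (B r) r := by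
    intro r hr
    have hrpos := hr0 r hr
    have p1 : HasDerivAt (fun x : ℝ => x ^ (-β)) (-β * r ^ (-β - 1)) r :=
      Real.hasDerivAt_rpow_const (Or.inl hrpos.ne')
    have p1' := p1.const_mul (-(K / (m ^ 2 * β)))
    have hmh : m * (r * Real.log r ^ ((3:ℝ)/4)) ≠ 0 := by
      have := hhpos r hr
      simp only [hh, hL] at this
      positivity
    have p2 := ((hasDerivAt_hfun (hr1 r hr)).const_mul m).inv hmh
    have p := p1'.sub p2
    refine p.congr_deriv ?_
    simp only [hB, hh', hh, hL]
    rw [show -(β + 1) = -β - 1 by ring]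
    have hrb : (0:ℝ) < r ^ (-β - 1) := Real.rpow_pos_of_pos hrpos _
    have hLr : (0:ℝ) < Real.log r ^ ((3:ℝ)/4) := Real.rpow_pos_of_pos (hlogpos r hr) _
    field_simp
    ring
  -- integrability of B
  have hBc : ContinuousOn B (Set.Icc a b) := by
    apply ContinuousOn.add
    · exact continuousOn_const.mul
        (continuousOn_id.rpow_const (fun r hr => Or.inl (hr0 r hr).ne'))
    · exact hh'c.div (continuousOn_const.mul (hhc.pow 2))
        (fun r hr => (mul_ne_zero hm.ne' (pow_ne_zero 2 (hhpos r hr).ne')))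
  have hBint : IntervalIntegrable B volume a b :=
    (hBc.mono (by rw [Set.uIcc_of_le hab])).intervalIntegrable
  have hIntB : ∫ r in a..b, B r = P b - P a := by
    apply intervalIntegral.integral_eq_sub_of_hasDerivAt
    · intro r hr
      exact hPderiv r (by rwa [Set.uIcc_of_le hab] at hr)
    · exact hBint
  -- bound on P b - P a
  have hrapos : (0:ℝ) < a := by linarith
  have hrbpos : (0:ℝ) < b := by linarith
  have habpow : (0:ℝ) < a ^ β := Real.rpow_pos_of_pos hrapos β
  have hbbpow : (0:ℝ) < b ^ β := Real.rpow_pos_of_pos hrbpos β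
  have hhA := hhpos a haicc
  have hhB := hhpos b hbicc
  have hPa : -P a = K / (β * a ^ β * m ^ 2) + 1 / (m * h a) := by
    simp only [hP, hh, hL]
    rw [Real.rpow_neg hrapos.le]
    have hLa0 : (0:ℝ) < Real.log a ^ ((3:ℝ)/4) :=
      Real.rpow_pos_of_pos (hlogpos a haicc) _
    field_simp
    ring
  have hPb : P b ≤ 0 := by
    simp only [hP, hh, hL]
    have h1 : (0:ℝ) ≤ K / (m ^ 2 * β) * b ^ (-β) := by positivity
    have hLb0 : (0:ℝ) < Real.log b ^ ((3:ℝ)/4) :=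
      Real.rpow_pos_of_pos (hlogpos b hbicc) _
    have h2 : (0:ℝ) < (m * (b * Real.log b ^ ((3:ℝ)/4)))⁻¹ := by positivity
    have h3 : -(K / (m ^ 2 * β)) * b ^ (-β) ≤ 0 := by
      have : (0:ℝ) ≤ K / (m ^ 2 * β) * b ^ (-β) := by positivity
      linarith only [this]
    linarith only [h2, h3]
  have hPbound : P b - P a ≤ K / (β * a ^ β * m ^ 2) + 1 / (m * h a) := by
    rw [← hPa]; linarith only [hPb]
  -- bound the integral of ‖v‖
  have hvnormint : IntervalIntegrable (fun r => ‖v r‖) volume a b := hvint.norm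
  have hIv : ‖∫ r in a..b, v r‖ ≤ K / (β * a ^ β * m ^ 2) + 1 / (m * h a) := by
    calc ‖∫ r in a..b, v r‖ ≤ ∫ r in a..b, ‖v r‖ :=
          intervalIntegral.norm_integral_le_integral_norm hab
      _ ≤ ∫ r in a..b, B r := intervalIntegral.integral_mono_on hab hvnormint hBint hvbound
      _ = P b - P a := hIntB
      _ ≤ _ := hPbound
  -- lower bound on h a, monotonicity
  have hlog2 : (1:ℝ)/2 ≤ Real.log a := by
    have := Real.log_two_gt_d9
    have hle : Real.log 2 ≤ Real.log a := Real.log_le_log (by norm_num) ha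
    linarith
  have hLa : (1:ℝ)/2 ≤ L a := by
    have s1 : ((1:ℝ)/2) ^ ((3:ℝ)/4) ≤ Real.log a ^ ((3:ℝ)/4) :=
      Real.rpow_le_rpow (by norm_num) hlog2 (by norm_num)
    have s2 : ((1:ℝ)/2 : ℝ) ≤ ((1:ℝ)/2) ^ ((3:ℝ)/4) := by
      have := Real.rpow_le_rpow_of_exponent_ge (x := (1:ℝ)/2) (by norm_num) (by norm_num)
        (show (3:ℝ)/4 ≤ 1 by norm_num)
      rwa [Real.rpow_one] at this
    simp only [hL]
    linarith
  have hha2 : a / 2 ≤ h a := by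
    have := mul_le_mul_of_nonneg_left hLa (le_of_lt hrapos)
    simp only [hh]
    calc a / 2 = a * (1/2) := by ring
      _ ≤ a * L a := this
  have hmono : h a ≤ h b := by
    have hLab : L a ≤ L b := by
      simp only [hL]
      exact Real.rpow_le_rpow (Real.log_nonneg (by linarith)) (Real.log_le_log hrapos hab)
        (by norm_num)
    simp only [hh]
    exact mul_le_mul hab hLab (hLpos a haicc).le hrbpos.le
  have hq : 1 / (m * h a) ≤ 2 * (1 / (a * m)) := by
    have e : (2:ℝ) * (1 / (a * m)) = 1 / (a * m / 2) := by
      field_simp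
    rw [e]
    apply one_div_le_one_div_of_le (by have := mul_pos hrapos hm; linarith only [this])
    calc a * m / 2 = m * (a / 2) := by ring
      _ ≤ m * h a := mul_le_mul_of_nonneg_left hha2 hm.le
  have hqb : 1 / (m * h b) ≤ 1 / (m * h a) := by
    apply one_div_le_one_div_of_le (mul_pos hm hhA)
    exact mul_le_mul_of_nonneg_left hmono hm.le
  -- assemble
  have hGa := hGbound a haicc
  have hGb := hGbound b hbicc
  have hKt : (0:ℝ) ≤ K / (β * a ^ β * m ^ 2) := by positivity
  have ham : (0:ℝ) ≤ 1 / (a * m) := by positivity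
  calc ‖∫ r in a..b, u r‖ = ‖G b - G a - ∫ r in a..b, v r‖ := by rw [hsplit]
    _ ≤ ‖G b - G a‖ + ‖∫ r in a..b, v r‖ := norm_sub_le _ _
    _ ≤ (‖G b‖ + ‖G a‖) + ‖∫ r in a..b, v r‖ := by
        have := norm_sub_le (G b) (G a)
        linarith only [this, norm_nonneg (∫ r in a..b, v r)]
    _ ≤ (1 / (m * h b) + 1 / (m * h a)) + (K / (β * a ^ β * m ^ 2) + 1 / (m * h a)) :=
        add_le_add (add_le_add hGb hGa) hIv
    _ ≤ 6 * (1 / (a * m) + K / (β * a ^ β * m ^ 2)) := by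
        linarith only [hq, hqb, hKt, ham]
end
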